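/- The Hamiltonian ĥ(x) = (s/2)⟨pr_𝔥 x, pr_𝔥 x⟩ + (p/2)⟨x − pr_𝔥 x − pr_{𝔳_{n−1}} x, x − pr_𝔥 x − pr_{𝔳_{n−1}} x⟩ + (q/2)⟨pr_{𝔳_{n−1}} x, pr_{𝔳_{n−1}} x⟩ on 𝔨ⁿ, where 𝔳_{n−1} = 𝔨_{ν^{n−1}} with ν^{n−1} = (1,…,1,−(n−1))/√(n²−n), equals (p/2)Σ_{k=1}^{n−1}⟨x_k,x_k⟩ + ½(qn/(n−1) − p/(n−1))⟨xₙ,xₙ⟩ + ½(s/n − p/(n−1) + q/(n²−n))⟨μ,μ⟩ + (p/(n−1) − q/(n−1))⟨μ,xₙ⟩, where μ = x₁+⋯+xₙ. -/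

import Mathlib

open scoped BigOperators

private lemma weighted_sum_split {V : Type*} [AddCommGroup V] [Module ℝ V]
    {n : ℕ} {ν : Fin n → ℝ} {c : ℝ} {L : Fin n}
    (hνL : ν L = c - (n:ℝ) * c) (hνj : ∀ j : Fin n, j ≠ L → ν j = c)
    (g : Fin n → V) :
    ∑ j, ν j • g j = c • (∑ j, g j) - ((n:ℝ)*c) • g L := by
  have h1 : ∀ j : Fin n, ν j • g j
      = c • g j - (if j = L then ((n:ℝ)*c) • g j else 0) := by
    intro j
    by_cases h : j = L
    · subst h
      rw [hνL, if_pos rfl, sub_smul]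
    · rw [hνj j h, if_neg h, sub_zero]
  rw [Finset.sum_congr rfl fun j _ => h1 j, Finset.sum_sub_distrib,
    Finset.sum_ite_eq' Finset.univ L, if_pos (Finset.mem_univ L), Finset.smul_sum]


/-- The Hamiltonian of the metric `ds²_{p,q,s}` in the form
`ĥ(x) = (s/2)⟨pr_𝔥 x, pr_𝔥 x⟩ + (p/2)⟨x - pr_𝔥 x - pr_{𝔳_{n-1}} x, ·⟩
      + (q/2)⟨pr_{𝔳_{n-1}} x, ·⟩`,
where `𝔳_{n-1} = 𝔨_{ν}` with `ν = (1,…,1,-(n-1))/√(n²-n)`, equals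
`(p/2)∑_{k<n-1}⟨x_k,x_k⟩ + ½(qn/(n-1) - p/(n-1))⟨xₙ,xₙ⟩
  + ½(s/n - p/(n-1) + q/(n²-n))⟨μ,μ⟩ + (p/(n-1) - q/(n-1))⟨μ,xₙ⟩`,
with `μ = x₁+⋯+xₙ`. -/
theorem einstein_hamiltonian_identity
    {𝔨 : Type*} [AddCommGroup 𝔨] [Module ℝ 𝔨]
    (B : LinearMap.BilinForm ℝ 𝔨)
    (hsymm : ∀ a b : 𝔨, B a b = B b a)
    (n : ℕ) (hn : 2 ≤ n) (p q s : ℝ) (x : Fin n → 𝔨) :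
    let μ : 𝔨 := ∑ i, x i
    let prh : Fin n → 𝔨 := fun _ => (n : ℝ)⁻¹ • μ
    let ν : Fin n → ℝ := fun i =>
      if (i : ℕ) < n - 1 then 1 / Real.sqrt ((n : ℝ) ^ 2 - n)
      else -((n : ℝ) - 1) / Real.sqrt ((n : ℝ) ^ 2 - n)
    let prv : Fin n → 𝔨 := fun i => ν i • ∑ j, ν j • x j
    let xn : 𝔨 := x ⟨n - 1, by omega⟩
    s / 2 * (∑ i, B (prh i) (prh i))
      + p / 2 * (∑ i, B (x i - prh i - prv i) (x i - prh i - prv i))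
      + q / 2 * (∑ i, B (prv i) (prv i))
    = p / 2 * (∑ i ∈ Finset.univ.filter fun i : Fin n => (i : ℕ) < n - 1, B (x i) (x i))
      + 1 / 2 * (q * n / ((n : ℝ) - 1) - p / ((n : ℝ) - 1)) * B xn xn
      + 1 / 2 * (s / n - p / ((n : ℝ) - 1) + q / ((n : ℝ) ^ 2 - n)) * B μ μ
      + (p / ((n : ℝ) - 1) - q / ((n : ℝ) - 1)) * B μ xn := by
  intro μ prh ν prv xn
  have hn2 : (2:ℝ) ≤ (n:ℝ) := by exact_mod_cast hn
  have hn0 : (n:ℝ) ≠ 0 := by linarith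
  have hn1 : (n:ℝ) - 1 ≠ 0 := by linarith
  have hpos : (0:ℝ) < (n:ℝ)^2 - n := by nlinarith
  set r := Real.sqrt ((n:ℝ)^2 - n) with hrdef
  have hr2 : r^2 = (n:ℝ)^2 - n := Real.sq_sqrt hpos.le
  have hrne : r ≠ 0 := (Real.sqrt_pos.mpr hpos).ne'
  set c : ℝ := 1 / r with hcdef
  have hc2 : c * c = 1 / ((n:ℝ)^2 - n) := by
    rw [hcdef, div_mul_div_comm, one_mul, ← sq, hr2]
  set L : Fin n := ⟨n - 1, by omega⟩ with hL
  have hxL : xn = x L := rfl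
  have hνL : ν L = c - (n:ℝ) * c := by
    show (if (n-1 : ℕ) < n - 1 then _ else _) = _
    simp only [lt_irrefl, if_false]
    rw [← hrdef, hcdef]
    ring
  have hνj : ∀ j : Fin n, j ≠ L → ν j = c := by
    intro j hj
    have : (j:ℕ) < n - 1 := by
      have := j.2
      have hne : (j:ℕ) ≠ n - 1 := fun h => hj (Fin.ext h)
      omega
    show (if (j:ℕ) < n - 1 then _ else _) = _
    simp [this, hcdef]
    exact hrdef.symm
  have hSnu : ∑ j, ν j = 0 := by
    have h := weighted_sum_split hνL hνj (fun _ => (1:ℝ))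
    simp only [smul_eq_mul, mul_one, Finset.sum_const, Finset.card_univ, Fintype.card_fin,
      nsmul_eq_mul] at h
    rw [h]; ring
  have hSnu2 : ∑ j, ν j * ν j = 1 := by
    have h := weighted_sum_split hνL hνj ν
    simp only [smul_eq_mul] at h
    rw [h, hSnu, hνL]
    have : c * 0 - (n:ℝ) * c * (c - n * c) = ((n:ℝ)^2 - n) * (c * c) := by ring
    rw [this, hc2]
    field_simp
  have hw : ∑ j, ν j • x j = c • μ - ((n:ℝ)*c) • xn := by
    rw [hxL]; exact weighted_sum_split hνL hνj x
  set Mm := B μ μ with hMm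
  set NN := B xn xn with hNN
  set PP := B μ xn with hPP
  set W : ℝ := (Mm - 2*(n:ℝ)*PP + (n:ℝ)^2*NN)/((n:ℝ)^2 - n) with hWdef
  have hW : B (∑ j, ν j • x j) (∑ j, ν j • x j) = W := by
    rw [hw]
    simp only [map_sub, map_smul, LinearMap.sub_apply, LinearMap.smul_apply, smul_eq_mul]
    rw [hsymm xn μ, ← hMm, ← hNN, ← hPP, hWdef]
    linear_combination (Mm - 2*(n:ℝ)*PP + (n:ℝ)^2*NN) * hc2
  set S : ℝ := ∑ i, B (x i) (x i) with hS
  have hE1 : ∑ i, B (prh i) (prh i) = Mm / n := by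
    have h : ∀ i : Fin n, B (prh i) (prh i) = (n:ℝ)⁻¹ * ((n:ℝ)⁻¹ * Mm) := by
      intro i
      show B ((n:ℝ)⁻¹ • μ) ((n:ℝ)⁻¹ • μ) = _
      simp [map_smul, smul_eq_mul, hMm]
    rw [Finset.sum_congr rfl fun i _ => h i, Finset.sum_const, Finset.card_univ,
      Fintype.card_fin, nsmul_eq_mul]
    field_simp
  have hE3 : ∑ i, B (prv i) (prv i) = W := by
    have h : ∀ i : Fin n, B (prv i) (prv i)
        = (ν i * ν i) * B (∑ j, ν j • x j) (∑ j, ν j • x j) := by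
      intro i
      show B (ν i • ∑ j, ν j • x j) (ν i • ∑ j, ν j • x j) = _
      simp only [map_smul, LinearMap.smul_apply, smul_eq_mul]; ring
    rw [Finset.sum_congr rfl fun i _ => h i, ← Finset.sum_mul, hSnu2, one_mul, hW]
  have hxprh : ∑ i, B (x i) (prh i) = (n:ℝ)⁻¹ * Mm := by
    have h : ∀ i : Fin n, B (x i) (prh i) = (n:ℝ)⁻¹ * B (x i) μ := by
      intro i
      show B (x i) ((n:ℝ)⁻¹ • μ) = _
      simp only [map_smul, LinearMap.smul_apply, smul_eq_mul]
    rw [Finset.sum_congr rfl fun i _ => h i, ← Finset.mul_sum]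
    congr 1
    rw [← LinearMap.sum_apply, ← map_sum]
  have hxprv : ∑ i, B (x i) (prv i) = W := by
    have h : ∀ i : Fin n, B (x i) (prv i)
        = B (ν i • x i) (∑ j, ν j • x j) := by
      intro i
      show B (x i) (ν i • ∑ j, ν j • x j) = _
      simp only [map_smul, LinearMap.smul_apply, smul_eq_mul]
    rw [Finset.sum_congr rfl fun i _ => h i, ← LinearMap.sum_apply, ← map_sum, hW]
  have hprhprv : ∑ i, B (prh i) (prv i) = 0 := by
    have h : ∀ i : Fin n, B (prh i) (prv i)
        = ν i * ((n:ℝ)⁻¹ * B μ (∑ j, ν j • x j)) := by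
      intro i
      show B ((n:ℝ)⁻¹ • μ) (ν i • ∑ j, ν j • x j) = _
      simp only [map_smul, LinearMap.smul_apply, smul_eq_mul]
    rw [Finset.sum_congr rfl fun i _ => h i, ← Finset.sum_mul, hSnu, zero_mul]
  have expand : ∀ a b d : 𝔨, B (a - b - d) (a - b - d)
      = B a a - 2*(B a b) - 2*(B a d) + B b b + 2*(B b d) + B d d := by
    intro a b d
    simp only [map_sub, LinearMap.sub_apply]
    rw [hsymm b a, hsymm d a, hsymm d b]
    ring
  have hE2 : ∑ i, B (x i - prh i - prv i) (x i - prh i - prv i) = S - Mm/n - W := by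
    rw [Finset.sum_congr rfl fun i _ => expand (x i) (prh i) (prv i)]
    simp only [Finset.sum_add_distrib, Finset.sum_sub_distrib, ← Finset.mul_sum]
    rw [hxprh, hxprv, hE1, hprhprv, hE3, ← hS]
    field_simp
    ring
  have hfil : ∑ i ∈ Finset.univ.filter (fun i : Fin n => (i : ℕ) < n - 1), B (x i) (x i)
      = S - NN := by
    have hLval : (L : ℕ) = n - 1 := rfl
    have hcompl : Finset.univ.filter (fun i : Fin n => ¬ (i : ℕ) < n - 1) = {L} := by
      ext j
      simp only [Finset.mem_filter, Finset.mem_univ, true_and, Finset.mem_singleton]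
      constructor
      · intro hj
        have h2 := j.2
        exact Fin.ext (by omega)
      · intro hj; subst hj; omega
    have h := Finset.sum_filter_add_sum_filter_not Finset.univ
      (fun i : Fin n => (i : ℕ) < n - 1) (fun i => B (x i) (x i))
    rw [hcompl, Finset.sum_singleton, ← hNN, ← hS] at h
    linarith
  rw [hE1, hE2, hE3, hfil, hWdef]
  field_simp
  ring
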